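/- Consider two experts with thresholds θ₁ = (1 + t̃)/2 and θ₂ = 1, cost c = 1, and T rounds in each of which a single individual arrives with p(t) uniform on (t̃, 1), for fixed t̃ ∈ [0,1). Always assigning to expert 1 yields expected cumulative utility −T(1 − t̃)/8, while always assigning to expert 2 yields expected cumulative utility 0. Hence the regret of the first algorithm is T(1 − t̃)/8, linear in T. -/
import Mathlib


open MeasureTheory Set

lemma ite_integral_eq (tq m : ℝ) (hm : tq < m) (hm1 : m ≤ 1) :
    (∫ p in Ioo tq (1 : ℝ), (if m ≤ p then p - 1 else 0))
      = -(1 - m)^2 / 2 := by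
  have h1 : (fun p : ℝ => if m ≤ p then p - 1 else 0)
      = (Ici m).indicator (fun p => p - 1) := by
    funext p; simp [Set.indicator, Set.mem_Ici]
  rw [h1, setIntegral_indicator measurableSet_Ici]
  have h2 : Ioo tq (1 : ℝ) ∩ Ici m = Ico m 1 := by
    ext x
    simp only [mem_inter_iff, mem_Ioo, mem_Ici, mem_Ico]
    constructor
    · rintro ⟨⟨_, hx1⟩, hxm⟩; exact ⟨hxm, hx1⟩
    · rintro ⟨hxm, hx1⟩; exact ⟨⟨lt_of_lt_of_le hm hxm, hx1⟩, hxm⟩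
  rw [h2, MeasureTheory.integral_Ico_eq_integral_Ioo,
    ← MeasureTheory.integral_Ioc_eq_integral_Ioo,
    ← intervalIntegral.integral_of_le hm1]
  have : (∫ x in m..(1:ℝ), (x - 1)) = (∫ x in m..(1:ℝ), x) - ∫ x in m..(1:ℝ), (1:ℝ) := by
    exact intervalIntegral.integral_sub intervalIntegral.intervalIntegrable_id
      (intervalIntegrable_const : IntervalIntegrable (fun _ => (1:ℝ)) volume m 1)
  rw [this, integral_id, intervalIntegral.integral_const]
  simp only [smul_eq_mul, mul_one]
  ring

/-- Linear-regret instance with `c = 1`: expert 1 has threshold `(1+tq)/2`,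
expert 2 threshold `1`; each round an individual arrives with `p` uniform on
`(tq, 1)` (here `tq` plays the role of `t̃`). Always using expert 1 yields
expected cumulative utility `−T(1−tq)/8`, always using expert 2 yields `0`,
so the regret of the first algorithm is `T(1−tq)/8`, linear in `T`. -/
theorem linear_regret_instance_c_one
    (tq : ℝ) (ht : 0 ≤ tq ∧ tq < 1) (T : ℕ) :
    (T : ℝ) * ((1 / (1 - tq)) *
        ∫ p in Ioo tq (1 : ℝ), (if (1 + tq) / 2 ≤ p then p - 1 else 0))
      = -(T * (1 - tq) / 8) ∧
    (T : ℝ) * ((1 / (1 - tq)) *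
        ∫ p in Ioo tq (1 : ℝ), (if (1 : ℝ) ≤ p then p - 1 else 0))
      = 0 ∧
    (T : ℝ) * ((1 / (1 - tq)) *
        ∫ p in Ioo tq (1 : ℝ), (if (1 : ℝ) ≤ p then p - 1 else 0))
      - (T : ℝ) * ((1 / (1 - tq)) *
        ∫ p in Ioo tq (1 : ℝ), (if (1 + tq) / 2 ≤ p then p - 1 else 0))
      = T * (1 - tq) / 8 := by
  obtain ⟨ht0, ht1⟩ := ht
  have hne : (1 : ℝ) - tq ≠ 0 := by linarith
  have hi1 := ite_integral_eq tq ((1 + tq) / 2) (by linarith) (by linarith)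
  have hi2 := ite_integral_eq tq 1 ht1 le_rfl
  rw [hi1, hi2]
  refine ⟨?_, ?_, ?_⟩ <;> field_simp <;> ring
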